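/- Let α ∈ (0,1) and let z > 0 satisfy Φ(z) = 1 − α/2. Suppose (T_k)_{k≥1} is a sequence of real random variables such that there exist an even polynomial q_3 and functions r_k with sup_{x∈ℝ} |r_k(x)| = O(k^{−2}) and P(T_k ≤ x) = Φ(x) + q_1(x)φ(x)/√k + q_2(x)φ(x)/k + q_3(x)φ(x)/k^{3/2} + r_k(x) for all x ∈ ℝ, where q_1(x) = √2 + (2√2/3)(x² − 1) and q_2(x) = −5x − (23/6)(x³ − 3x) + (4/9)(x⁵ − 10x³ + 15x). Set c_k = z − q_2(z)/k. Then the Edgeworth-corrected two-sided coverage satisfies P(−c_k < T_k ≤ c_k) = (1 − α) + O(1/k²) as k → ∞. -/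

import Mathlib

open MeasureTheory ProbabilityTheory Real Filter

/-- The cumulative distribution function `Φ` of the standard normal distribution. -/
noncomputable def stdNormalCDF (x : ℝ) : ℝ :=
  ((gaussianReal 0 1) (Set.Iic x)).toReal

/-- The density `φ` of the standard normal distribution. -/
noncomputable def stdNormalPDF (x : ℝ) : ℝ :=
  gaussianPDFReal 0 1 x

lemma pdf_def (x : ℝ) : stdNormalPDF x = (Real.sqrt (2*π))⁻¹ * Real.exp (-(x^2)/2) := by
  simp [stdNormalPDF, gaussianPDFReal]

lemma pdf_even (x : ℝ) : stdNormalPDF (-x) = stdNormalPDF x := by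
  simp [pdf_def]

lemma pdf_nonneg (x : ℝ) : 0 ≤ stdNormalPDF x := gaussianPDFReal_nonneg 0 1 x

lemma sqrt_two_pi_ge_one : (1:ℝ) ≤ Real.sqrt (2*π) := by
  rw [show (1:ℝ) = Real.sqrt 1 by simp]
  apply Real.sqrt_le_sqrt
  nlinarith [Real.pi_gt_three]

lemma pdf_le_one (x : ℝ) : stdNormalPDF x ≤ 1 := by
  rw [pdf_def]
  have h1 : (Real.sqrt (2*π))⁻¹ ≤ 1 := by
    rw [inv_le_one_iff₀]; right; exact sqrt_two_pi_ge_one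
  have h2 : Real.exp (-(x^2)/2) ≤ 1 := by
    rw [Real.exp_le_one_iff]; nlinarith [sq_nonneg x]
  nlinarith [Real.exp_pos (-(x^2)/2), inv_nonneg.mpr (Real.sqrt_nonneg (2*π))]

lemma hasDerivAt_pdf (x : ℝ) :
    HasDerivAt stdNormalPDF (-x * stdNormalPDF x) x := by
  have h1 : HasDerivAt (fun x : ℝ => -(x^2)/2) (-x) x := by
    have := ((hasDerivAt_pow 2 x).neg).div_const 2
    simpa using this.congr_deriv (by ring)
  have h2 := (h1.exp).const_mul ((Real.sqrt (2*π))⁻¹)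
  have : stdNormalPDF = fun x => (Real.sqrt (2*π))⁻¹ * Real.exp (-(x^2)/2) := by
    funext y; exact pdf_def y
  rw [this]
  exact h2.congr_deriv (by beta_reduce; ring)

lemma deriv_pdf_bound (x : ℝ) : ‖-x * stdNormalPDF x‖ ≤ 1 := by
  rw [pdf_def, norm_mul, norm_neg, Real.norm_eq_abs, Real.norm_eq_abs]
  rw [abs_of_pos (by positivity : (0:ℝ) < (Real.sqrt (2*π))⁻¹ * Real.exp (-(x^2)/2))]
  have hx : |x| ≤ Real.exp (x^2/2) := by
    have h1 : |x| ≤ 1 + x^2/2 := by nlinarith [sq_nonneg (|x| - 1), sq_abs x]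
    have h2 : x^2/2 + 1 ≤ Real.exp (x^2/2) := Real.add_one_le_exp _
    linarith
  have hpos : (0:ℝ) < Real.exp (x^2/2) := Real.exp_pos _
  have key : |x| * Real.exp (-(x^2)/2) ≤ 1 := by
    rw [show -(x^2)/2 = -(x^2/2) by ring, Real.exp_neg]
    exact mul_inv_le_one_of_le₀ hx hpos.le
  have hs : (0:ℝ) < Real.sqrt (2*π) := lt_of_lt_of_le one_pos sqrt_two_pi_ge_one
  calc |x| * ((Real.sqrt (2*π))⁻¹ * Real.exp (-(x^2)/2))
      = (Real.sqrt (2*π))⁻¹ * (|x| * Real.exp (-(x^2)/2)) := by ring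
    _ ≤ 1 * 1 := by
        apply mul_le_mul _ key (by positivity) zero_le_one
        rw [inv_le_one_iff₀]; right; exact sqrt_two_pi_ge_one
    _ = 1 := by ring

lemma pdf_lipschitz (a b : ℝ) : |stdNormalPDF b - stdNormalPDF a| ≤ |b - a| := by
  have := Convex.norm_image_sub_le_of_norm_hasDerivWithin_le
    (f := stdNormalPDF) (f' := fun x => -x * stdNormalPDF x) (s := Set.univ) (C := 1)
    (fun x _ => (hasDerivAt_pdf x).hasDerivWithinAt)
    (fun x _ => deriv_pdf_bound x) convex_univ (Set.mem_univ a) (Set.mem_univ b)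
  simpa [Real.norm_eq_abs] using this

lemma pdf_continuous : Continuous stdNormalPDF := by
  have : stdNormalPDF = fun x => (Real.sqrt (2*π))⁻¹ * Real.exp (-(x^2)/2) := by
    funext y; exact pdf_def y
  rw [this]; continuity

lemma pdf_integrable : Integrable stdNormalPDF := integrable_gaussianPDFReal 0 1

lemma cdf_eq_integral (x : ℝ) : stdNormalCDF x = ∫ t in Set.Iic x, stdNormalPDF t := by
  rw [stdNormalCDF, gaussianReal_apply_eq_integral 0 (by norm_num) (Set.Iic x),
    ENNReal.toReal_ofReal]
  · rfl
  · exact setIntegral_nonneg measurableSet_Iic (fun t _ => pdf_nonneg t)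

lemma cdf_neg (x : ℝ) : stdNormalCDF (-x) = 1 - stdNormalCDF x := by
  have h1 : stdNormalCDF (-x) = ∫ t in Set.Ici x, stdNormalPDF t := by
    rw [cdf_eq_integral]
    have : ∀ t, stdNormalPDF t = stdNormalPDF (-t) := fun t => (pdf_even t).symm
    rw [show (∫ t in Set.Iic (-x), stdNormalPDF t) = ∫ t in Set.Iic (-x), stdNormalPDF (-t) by
      exact setIntegral_congr_fun measurableSet_Iic (fun t _ => this t)]
    rw [integral_comp_neg_Iic, neg_neg, MeasureTheory.integral_Ici_eq_integral_Ioi]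
  rw [h1, cdf_eq_integral, eq_sub_iff_add_eq, add_comm,
    MeasureTheory.integral_Ici_eq_integral_Ioi]
  rw [← integral_gaussianPDFReal_eq_one 0 (v := 1) (by norm_num)]
  have := intervalIntegral.integral_Iic_add_Ioi (b := x)
    (pdf_integrable.integrableOn) (pdf_integrable.integrableOn)
  rw [this]; rfl

lemma cdf_sub_eq (a b : ℝ) :
    stdNormalCDF b - stdNormalCDF a = ∫ t in a..b, stdNormalPDF t := by
  rw [cdf_eq_integral, cdf_eq_integral]
  exact intervalIntegral.integral_Iic_sub_Iic pdf_integrable.integrableOn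
    pdf_integrable.integrableOn

lemma cdf_taylor (a b : ℝ) :
    |stdNormalCDF b - stdNormalCDF a - stdNormalPDF a * (b - a)| ≤ (b - a)^2 := by
  rw [cdf_sub_eq]
  have hInt : ∀ c d : ℝ, IntervalIntegrable stdNormalPDF volume c d :=
    fun c d => pdf_continuous.intervalIntegrable c d
  have h1 : (∫ t in a..b, stdNormalPDF t) - stdNormalPDF a * (b - a)
      = ∫ t in a..b, (stdNormalPDF t - stdNormalPDF a) := by
    rw [intervalIntegral.integral_sub (hInt a b) (intervalIntegrable_const)]
    simp [mul_comm]
  rw [h1]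
  have h2 : ∀ t ∈ Set.uIoc a b, ‖stdNormalPDF t - stdNormalPDF a‖ ≤ |b - a| := by
    intro t ht
    rw [Real.norm_eq_abs]
    refine le_trans (pdf_lipschitz a t) ?_
    rcases Set.mem_uIoc.mp ht with h | h
    · rw [abs_of_pos (by linarith [h.1, h.2] : (0:ℝ) < t - a)]
      rw [abs_of_nonneg (by linarith [h.1, h.2] : (0:ℝ) ≤ b - a)]
      linarith [h.2]
    · rw [abs_of_nonpos (by linarith [h.1, h.2] : t - a ≤ 0)]
      rw [abs_of_nonpos (by linarith [h.1, h.2] : b - a ≤ 0)]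
      linarith [h.1]
  calc |∫ t in a..b, (stdNormalPDF t - stdNormalPDF a)|
      ≤ |b - a| * |b - a| := by
        simpa [Real.norm_eq_abs] using
          intervalIntegral.norm_integral_le_of_norm_le_const h2
    _ = (b - a)^2 := by rw [← abs_mul, ← sq, abs_sq]

noncomputable def pq2 (y : ℝ) : ℝ :=
  -5 * y - (23 / 6) * (y ^ 3 - 3 * y) + (4 / 9) * (y ^ 5 - 10 * y ^ 3 + 15 * y)

lemma hasDerivAt_pq2 (y : ℝ) :
    HasDerivAt pq2 ((20/9)*y^4 - (149/6)*y^2 + 79/6) y := by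
  have h1 : HasDerivAt (fun y : ℝ => y) 1 y := hasDerivAt_id y
  have h3 : HasDerivAt (fun y : ℝ => y^3) (3*y^2) y := by simpa using hasDerivAt_pow 3 y
  have h5 : HasDerivAt (fun y : ℝ => y^5) (5*y^4) y := by simpa using hasDerivAt_pow 5 y
  have h := ((h1.const_mul (-5 : ℝ)).sub ((h3.sub (h1.const_mul 3)).const_mul (23/6))).add
    (((h5.sub (h3.const_mul 10)).add (h1.const_mul 15)).const_mul (4/9))
  have heq : (20/9)*y^4 - (149/6)*y^2 + 79/6
      = -5 * 1 - 23 / 6 * (3*y^2 - 3 * 1) + 4 / 9 * (5*y^4 - 10 * (3*y^2) + 15 * 1) := by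
    ring
  rw [heq]
  have hfun : pq2 = fun y : ℝ => -5 * y - 23 / 6 * (y ^ 3 - 3 * y)
      + 4 / 9 * (y ^ 5 - 10 * y ^ 3 + 15 * y) := rfl
  rw [hfun]
  exact h

lemma pq2_bounds {z y : ℝ} (hz : 0 < z) (hy : y ∈ Set.Icc (z-1) (z+1)) :
    |pq2 y| ≤ (4/9)*(z+1)^5 + (149/18)*(z+1)^3 + (79/6)*(z+1) ∧
    |(20/9)*y^4 - (149/6)*y^2 + 79/6| ≤ (20/9)*(z+1)^4 + (149/6)*(z+1)^2 + 79/6 := by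
  have habs : |y| ≤ z + 1 := abs_le.mpr ⟨by linarith [hy.1], hy.2⟩
  have hpow : ∀ n : ℕ, |y ^ n| ≤ (z + 1) ^ n := by
    intro n
    rw [abs_pow]
    exact pow_le_pow_left₀ (abs_nonneg y) habs n
  have h1 := abs_le.mp (hpow 1)
  have h2 := abs_le.mp (hpow 2)
  have h3 := abs_le.mp (hpow 3)
  have h4 := abs_le.mp (hpow 4)
  have h5 := abs_le.mp (hpow 5)
  simp only [pow_one] at h1
  have hy2 : (0:ℝ) ≤ y^2 := sq_nonneg y
  have hy4 : (0:ℝ) ≤ y^4 := by positivity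
  constructor
  · have : pq2 y = (4/9)*y^5 - (149/18)*y^3 + (79/6)*y := by unfold pq2; ring
    rw [this]
    rw [abs_le]
    constructor <;> linarith [h1.1, h1.2, h3.1, h3.2, h5.1, h5.2]
  · rw [abs_le]
    constructor <;> linarith [h2.1, h2.2, h4.1, h4.2, sq_nonneg y, hy4]

lemma pq2_pdf_lip {z : ℝ} (hz : 0 < z) :
    ∀ u ∈ Set.Icc (z-1) (z+1), ∀ v ∈ Set.Icc (z-1) (z+1),
      |pq2 u * stdNormalPDF u - pq2 v * stdNormalPDF v|
        ≤ ((20/9)*(z+1)^4 + (149/6)*(z+1)^2 + 79/6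
            + (z+1) * ((4/9)*(z+1)^5 + (149/18)*(z+1)^3 + (79/6)*(z+1))) * |u - v| := by
  intro u hu v hv
  set A := (20/9)*(z+1)^4 + (149/6)*(z+1)^2 + 79/6 with hA
  set B := (4/9)*(z+1)^5 + (149/18)*(z+1)^3 + (79/6)*(z+1) with hB
  have key := Convex.norm_image_sub_le_of_norm_hasDerivWithin_le
    (f := fun y => pq2 y * stdNormalPDF y)
    (f' := fun y => ((20/9)*y^4 - (149/6)*y^2 + 79/6) * stdNormalPDF y
        + pq2 y * (-y * stdNormalPDF y))
    (s := Set.Icc (z-1) (z+1)) (C := A + (z+1) * B)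
    (fun y _ => ((hasDerivAt_pq2 y).mul (hasDerivAt_pdf y)).hasDerivWithinAt)
    (fun y hy => ?_) (convex_Icc _ _) hv hu
  · simpa [Real.norm_eq_abs] using key
  · obtain ⟨hBy, hAy⟩ := pq2_bounds hz hy
    rw [Real.norm_eq_abs]
    have hyabs : |y| ≤ z + 1 := abs_le.mpr ⟨by linarith [hy.1, hz], hy.2⟩
    have hφ0 := pdf_nonneg y
    have hφ1 := pdf_le_one y
    have e1 : |((20/9)*y^4 - (149/6)*y^2 + 79/6) * stdNormalPDF y| ≤ A * 1 := by
      rw [abs_mul, abs_of_nonneg hφ0]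
      exact mul_le_mul hAy hφ1 hφ0 (le_trans (abs_nonneg _) hAy)
    have e2 : |pq2 y * (-y * stdNormalPDF y)| ≤ B * ((z+1) * 1) := by
      rw [abs_mul, abs_mul, abs_neg, abs_of_nonneg hφ0]
      exact mul_le_mul hBy
        (mul_le_mul hyabs hφ1 hφ0 (by linarith)) (by positivity)
        (le_trans (abs_nonneg _) hBy)
    calc |((20/9)*y^4 - (149/6)*y^2 + 79/6) * stdNormalPDF y
            + pq2 y * (-y * stdNormalPDF y)|
        ≤ |((20/9)*y^4 - (149/6)*y^2 + 79/6) * stdNormalPDF y|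
            + |pq2 y * (-y * stdNormalPDF y)| := abs_add_le _ _
      _ ≤ A * 1 + B * ((z+1)*1) := add_le_add e1 e2
      _ = A + (z+1) * B := by ring

/-- If `Φ(z) = 1 − α/2` with `z > 0` and `(T_k)` admits a third-order
Edgeworth expansion (with some even polynomial `q₃` and uniformly `O(k⁻²)` remainder), then
with `c_k = z − q₂(z)/k` the Edgeworth-corrected two-sided coverage satisfies
`P(−c_k < T_k ≤ c_k) = (1 − α) + O(1/k²)` as `k → ∞`. -/
theorem corrected_two_sided_coverage
    {Ω : Type*} [MeasurableSpace Ω] (μ : Measure Ω) [IsProbabilityMeasure μ]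
    (T : ℕ → Ω → ℝ) (hmeas : ∀ k, Measurable (T k))
    (q₁ q₂ : ℝ → ℝ)
    (hq₁ : ∀ y, q₁ y = Real.sqrt 2 + (2 * Real.sqrt 2 / 3) * (y ^ 2 - 1))
    (hq₂ : ∀ y, q₂ y = -5 * y - (23 / 6) * (y ^ 3 - 3 * y)
        + (4 / 9) * (y ^ 5 - 10 * y ^ 3 + 15 * y))
    (α : ℝ) (hα : α ∈ Set.Ioo (0 : ℝ) 1)
    (z : ℝ) (hzpos : 0 < z) (hz : stdNormalCDF z = 1 - α / 2)
    (hEdge : ∃ q₃ : Polynomial ℝ, (∀ y : ℝ, q₃.eval (-y) = q₃.eval y) ∧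
        ∃ r : ℕ → ℝ → ℝ,
          (∃ C > (0 : ℝ), ∃ K : ℕ, ∀ k : ℕ, K ≤ k → ∀ x : ℝ, |r k x| ≤ C / (k : ℝ) ^ 2) ∧
          ∀ k : ℕ, 1 ≤ k → ∀ x : ℝ,
            (μ {ω | T k ω ≤ x}).toReal
              = stdNormalCDF x + q₁ x * stdNormalPDF x / Real.sqrt k
                + q₂ x * stdNormalPDF x / (k : ℝ)
                + q₃.eval x * stdNormalPDF x / (k : ℝ) ^ ((3 : ℝ) / 2)
                + r k x)
    (c : ℕ → ℝ) (hc : ∀ k, c k = z - q₂ z / (k : ℝ)) :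
    (fun k : ℕ => (μ {ω | -(c k) < T k ω ∧ T k ω ≤ c k}).toReal - (1 - α))
      =O[atTop] fun k : ℕ => 1 / (k : ℝ) ^ 2 := by
  obtain ⟨q₃, hq₃even, r, ⟨C, hCpos, K, hr⟩, hexp⟩ := hEdge
  have hq2p : ∀ y, q₂ y = pq2 y := fun y => (hq₂ y).trans rfl
  set M : ℝ := (20/9)*(z+1)^4 + (149/6)*(z+1)^2 + 79/6
      + (z+1) * ((4/9)*(z+1)^5 + (149/18)*(z+1)^3 + (79/6)*(z+1)) with hMdef
  have hM0 : 0 ≤ M := by positivity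
  rw [Asymptotics.isBigO_iff]
  refine ⟨2*(pq2 z)^2 + 2*M*|pq2 z| + 2*C, ?_⟩
  rw [eventually_atTop]
  have hm0 : (0:ℝ) < min z 1 := lt_min hzpos one_pos
  refine ⟨max (max K 1) (⌈|pq2 z| / min z 1⌉₊ + 1), fun k hk => ?_⟩
  have hkK : K ≤ k := le_trans (le_max_left _ _) (le_trans (le_max_left _ _) hk)
  have hk1 : 1 ≤ k := le_trans (le_max_right _ _) (le_trans (le_max_left _ _) hk)
  have hkR : (1:ℝ) ≤ (k:ℝ) := by exact_mod_cast hk1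
  have hkpos : (0:ℝ) < (k:ℝ) := by linarith
  have hsmall : |pq2 z| / (k:ℝ) ≤ min z 1 := by
    have h1 : (⌈|pq2 z| / min z 1⌉₊ + 1 : ℕ) ≤ k := le_trans (le_max_right _ _) hk
    have h2 : |pq2 z| / min z 1 ≤ ⌈|pq2 z| / min z 1⌉₊ := Nat.le_ceil _
    have h3 : (⌈|pq2 z| / min z 1⌉₊ : ℝ) + 1 ≤ (k:ℝ) := by exact_mod_cast h1
    rw [div_le_iff₀ hkpos]
    rw [div_le_iff₀ hm0] at h2
    nlinarith
  have hcz_eq : c k - z = -(pq2 z) / (k:ℝ) := by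
    rw [hc k, hq2p z]; ring
  have hcz_abs : |c k - z| = |pq2 z| / (k:ℝ) := by
    rw [hcz_eq, abs_div, abs_neg, abs_of_pos hkpos]
  have hcz : |c k - z| ≤ min z 1 := hcz_abs ▸ hsmall
  have hczm := abs_le.mp (le_trans hcz (min_le_right _ _))
  have hc0 : 0 ≤ c k := by
    have := abs_le.mp (le_trans hcz (min_le_left _ _))
    linarith [this.1]
  have hcIcc : c k ∈ Set.Icc (z-1) (z+1) := ⟨by linarith [hczm.1], by linarith [hczm.2]⟩
  have hzIcc : z ∈ Set.Icc (z-1) (z+1) := ⟨by linarith, by linarith⟩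
  -- Step A: write the two-sided probability as a difference of CDF values
  have hA : (μ {ω | -(c k) < T k ω ∧ T k ω ≤ c k}).toReal
      = (μ {ω | T k ω ≤ c k}).toReal - (μ {ω | T k ω ≤ -(c k)}).toReal := by
    have hneg : -(c k) ≤ c k := by linarith
    have hsub : {ω | T k ω ≤ -(c k)} ⊆ {ω | T k ω ≤ c k} :=
      fun ω h => le_trans h hneg
    have hms : MeasurableSet {ω | T k ω ≤ -(c k)} := hmeas k measurableSet_Iic
    have hsetEq : {ω | -(c k) < T k ω ∧ T k ω ≤ c k}
        = {ω | T k ω ≤ c k} \ {ω | T k ω ≤ -(c k)} := by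
      ext ω; simp only [Set.mem_setOf_eq, Set.mem_diff, not_le]; tauto
    rw [hsetEq, measure_diff hsub hms.nullMeasurableSet (measure_ne_top μ _),
      ENNReal.toReal_sub_of_le (measure_mono hsub) (measure_ne_top μ _)]
  -- Step B: use the Edgeworth expansion at c k and -(c k)
  have hq1even : q₁ (-(c k)) = q₁ (c k) := by rw [hq₁, hq₁]; ring
  have hq2odd : q₂ (-(c k)) = -(q₂ (c k)) := by rw [hq₂, hq₂]; ring
  have hdiff : (μ {ω | T k ω ≤ c k}).toReal - (μ {ω | T k ω ≤ -(c k)}).toReal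
      = stdNormalCDF (c k) - stdNormalCDF (-(c k))
        + 2 * (pq2 (c k) * stdNormalPDF (c k)) / (k:ℝ)
        + (r k (c k) - r k (-(c k))) := by
    rw [hexp k hk1 (c k), hexp k hk1 (-(c k)), hq1even, hq2odd, pdf_even, hq₃even,
      hq2p (c k)]
    ring
  have key : (μ {ω | -(c k) < T k ω ∧ T k ω ≤ c k}).toReal - (1 - α)
      = 2*(stdNormalCDF (c k) - stdNormalCDF z - stdNormalPDF z * (c k - z))
        + 2*(pq2 (c k) * stdNormalPDF (c k) - pq2 z * stdNormalPDF z)/(k:ℝ)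
        + (r k (c k) - r k (-(c k))) := by
    rw [hA, hdiff, cdf_neg]
    have h1 : (1:ℝ) - α = 2 * stdNormalCDF z - 1 := by rw [hz]; ring
    rw [h1]
    have h2 : stdNormalPDF z * (c k - z) = -(pq2 z * stdNormalPDF z) / (k:ℝ) := by
      rw [hcz_eq]; ring
    rw [h2]
    ring
  -- Final estimate
  rw [Real.norm_eq_abs, Real.norm_eq_abs, key]
  have habs1 : |1/(k:ℝ)^2| = 1/(k:ℝ)^2 := abs_of_pos (by positivity)
  rw [habs1]
  have hT := cdf_taylor z (c k)
  have hLip := pq2_pdf_lip hzpos (c k) hcIcc z hzIcc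
  have hr1 := hr k hkK (c k)
  have hr2 := hr k hkK (-(c k))
  have hcsq : (c k - z)^2 = (pq2 z)^2 / (k:ℝ)^2 := by rw [hcz_eq]; ring
  calc |2*(stdNormalCDF (c k) - stdNormalCDF z - stdNormalPDF z * (c k - z))
        + 2*(pq2 (c k) * stdNormalPDF (c k) - pq2 z * stdNormalPDF z)/(k:ℝ)
        + (r k (c k) - r k (-(c k)))|
      ≤ |2*(stdNormalCDF (c k) - stdNormalCDF z - stdNormalPDF z * (c k - z))|
        + |2*(pq2 (c k) * stdNormalPDF (c k) - pq2 z * stdNormalPDF z)/(k:ℝ)|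
        + |r k (c k) - r k (-(c k))| := abs_add_three _ _ _
    _ = 2*|stdNormalCDF (c k) - stdNormalCDF z - stdNormalPDF z * (c k - z)|
        + 2*|pq2 (c k) * stdNormalPDF (c k) - pq2 z * stdNormalPDF z|/(k:ℝ)
        + |r k (c k) - r k (-(c k))| := by
        rw [abs_mul, abs_div, abs_mul, abs_of_pos hkpos]
        norm_num
    _ ≤ 2*((pq2 z)^2/(k:ℝ)^2) + 2*(M*(|pq2 z|/(k:ℝ)))/(k:ℝ) + (C/(k:ℝ)^2 + C/(k:ℝ)^2) := by
        gcongr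
        · rw [← hcsq]; exact hT
        · calc |pq2 (c k) * stdNormalPDF (c k) - pq2 z * stdNormalPDF z|
              ≤ M * |c k - z| := hLip
            _ = M * (|pq2 z|/(k:ℝ)) := by rw [hcz_abs]
        · exact le_trans (abs_sub _ _) (add_le_add hr1 hr2)
    _ = (2*(pq2 z)^2 + 2*M*|pq2 z| + 2*C) * (1/(k:ℝ)^2) := by
        field_simp
        ring
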